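/- Define G(λ) = ∑_{k=0}^{∞} (1 + λk)/((k − λ)(1 + k²)) for λ < 0. Then G(λ) → −∞ as λ → −∞. -/

import Mathlib

noncomputable def G (l : ℝ) : ℝ :=
  ∑' k : ℕ, (1 + l * k) / ((k - l) * (1 + (k : ℝ) ^ 2))

lemma summable_invsq : Summable (fun k : ℕ => 1 / (1 + (k : ℝ) ^ 2)) := by
  have h0 : Summable (fun n : ℕ => 1 / ((n : ℝ)) ^ 2) :=
    Real.summable_one_div_nat_pow.mpr one_lt_two
  have h1 : Summable (fun n : ℕ => 2 * (1 / (((n + 1 : ℕ) : ℝ)) ^ 2)) :=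
    ((summable_nat_add_iff 1).mpr h0).mul_left 2
  refine h1.of_nonneg_of_le (fun k => by positivity) (fun k => ?_)
  have hk : (0 : ℝ) ≤ k := Nat.cast_nonneg k
  rw [mul_one_div, div_le_div_iff₀ (by positivity) (by positivity)]
  push_cast
  nlinarith [sq_nonneg ((k : ℝ) - 1)]

lemma summable_G (l : ℝ) (hl : l < 0) :
    Summable (fun k : ℕ => (1 + l * k) / ((k - l) * (1 + (k : ℝ) ^ 2))) := by
  apply Summable.of_abs
  apply (summable_invsq.mul_left (1 / (-l) + (-l))).of_nonneg_of_le
    (fun k => abs_nonneg _)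
  intro k
  have hk : (0 : ℝ) ≤ k := Nat.cast_nonneg k
  have hd : (0 : ℝ) < (k : ℝ) - l := by linarith
  have hd2 : (0 : ℝ) < 1 + (k : ℝ) ^ 2 := by positivity
  have heq : (1 + l * k) / (((k : ℝ) - l) * (1 + (k : ℝ) ^ 2))
      = ((1 + l * k) / ((k : ℝ) - l)) * (1 / (1 + (k : ℝ) ^ 2)) := by
    field_simp
  rw [heq, abs_mul, abs_of_pos (show (0:ℝ) < 1 / (1 + (k : ℝ) ^ 2) by positivity)]
  apply mul_le_mul_of_nonneg_right _ (by positivity)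
  rw [abs_div, abs_of_pos hd, div_le_iff₀ hd]
  have habs : |1 + l * (k : ℝ)| ≤ 1 + (-l) * k := by
    rw [abs_le]
    constructor <;> nlinarith [mul_nonneg (neg_nonneg.mpr hl.le) hk]
  have h1 : (1 / (-l)) * (-l) = 1 := one_div_mul_cancel (by linarith)
  nlinarith [mul_nonneg (one_div_nonneg.mpr (by linarith : (0:ℝ) ≤ -l)) hk, sq_nonneg l]

lemma not_summable_aux : ¬ Summable (fun k : ℕ => (k : ℝ) / (1 + (k : ℝ) ^ 2)) := by
  intro hs
  have h2 : Summable (fun k : ℕ => (((k + 1 : ℕ) : ℝ)) / (1 + ((k + 1 : ℕ) : ℝ) ^ 2)) :=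
    (summable_nat_add_iff 1).mpr hs
  have h3 : Summable (fun k : ℕ => 1 / ((k : ℝ) + 1)) := by
    apply (h2.mul_left 2).of_nonneg_of_le (fun k => by positivity)
    intro k
    have hk : (0 : ℝ) ≤ k := Nat.cast_nonneg k
    push_cast
    rw [mul_div_assoc', div_le_div_iff₀ (by positivity) (by positivity)]
    nlinarith [sq_nonneg ((k : ℝ) + 1)]
  have h4 : Summable (fun n : ℕ => 1 / (n : ℝ)) := by
    apply (summable_nat_add_iff 1).mp
    have : (fun n : ℕ => 1 / ((n + 1 : ℕ) : ℝ)) = fun n : ℕ => 1 / ((n : ℝ) + 1) := by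
      funext n; push_cast; ring
    rw [this]
    exact h3
  exact Real.not_summable_one_div_natCast h4

theorem stmt_5 : Filter.Tendsto G Filter.atBot Filter.atBot := by
  rw [Filter.tendsto_atBot]
  intro M
  have hpos : ∀ k : ℕ, 0 ≤ (k : ℝ) / (1 + (k : ℝ) ^ 2) := fun k => by positivity
  have hdiv := (not_summable_iff_tendsto_nat_atTop_of_nonneg hpos).mp not_summable_aux
  obtain ⟨N, hN⟩ := (hdiv.eventually_ge_atTop (4 * (1 - M))).exists
  -- S := sum over range (N+1)
  have hS : 4 * (1 - M) ≤ ∑ k ∈ Finset.range (N + 1), (k : ℝ) / (1 + (k : ℝ) ^ 2) := by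
    rw [Finset.sum_range_succ]
    have := hpos N
    linarith
  rw [Filter.eventually_atBot]
  refine ⟨min (-(N : ℝ)) (-2), fun l hlle => ?_⟩
  have hl2 : l ≤ -2 := le_trans hlle (min_le_right _ _)
  have hlN : l ≤ -(N : ℝ) := le_trans hlle (min_le_left _ _)
  have hl0 : l < 0 := by linarith
  set f : ℕ → ℝ := fun k => (1 + l * k) / (((k : ℝ) - l) * (1 + (k : ℝ) ^ 2)) with hf
  have hsum : Summable f := summable_G l hl0
  have hsplit := hsum.sum_add_tsum_nat_add (N + 1)
  have htail : ∑' k : ℕ, f (k + (N + 1)) ≤ 0 := by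
    apply tsum_nonpos
    intro k
    have hm1 : (1 : ℝ) ≤ ((k + (N + 1) : ℕ) : ℝ) := by
      have : 1 ≤ k + (N + 1) := by omega
      exact_mod_cast this
    apply div_nonpos_of_nonpos_of_nonneg
    · nlinarith [mul_nonneg (sub_nonneg.mpr hm1) (neg_nonneg.mpr hl0.le)]
    · have : (0:ℝ) ≤ ((k + (N + 1) : ℕ) : ℝ) - l := by linarith
      positivity
  have hhead : ∑ k ∈ Finset.range (N + 1), f k
      ≤ 1 - (1 / 4) * ∑ k ∈ Finset.range (N + 1), (k : ℝ) / (1 + (k : ℝ) ^ 2) := by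
    rw [Finset.sum_range_succ' f, Finset.sum_range_succ' (fun k => (k : ℝ) / (1 + (k : ℝ) ^ 2))]
    have h0 : f 0 ≤ 1 := by
      simp only [hf, Nat.cast_zero, mul_zero, add_zero, zero_sub]
      rw [div_le_one (by nlinarith)]
      nlinarith
    have hterm : ∀ k ∈ Finset.range N,
        f (k + 1) ≤ -((1 / 4) * (((k + 1 : ℕ) : ℝ) / (1 + ((k + 1 : ℕ) : ℝ) ^ 2))) := by
      intro k hk
      have hkN : (k : ℕ) + 1 ≤ N := Finset.mem_range.mp hk
      set j : ℝ := ((k + 1 : ℕ) : ℝ) with hj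
      have hj1 : (1 : ℝ) ≤ j := by rw [hj]; exact_mod_cast Nat.succ_le_succ (Nat.zero_le k)
      have hjN : j ≤ -l := by
        have : j ≤ (N : ℝ) := by rw [hj]; exact_mod_cast hkN
        linarith
      have hdp : (0 : ℝ) < j - l := by linarith
      have hq : (0 : ℝ) < 1 + j ^ 2 := by positivity
      have hgoal : f (k + 1) = (1 + l * j) / ((j - l) * (1 + j ^ 2)) := rfl
      rw [hgoal]
      rw [show -((1 / 4) * (j / (1 + j ^ 2))) = (-(j / 4)) / (1 + j ^ 2) by ring,
        div_le_div_iff₀ (mul_pos hdp hq) hq]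
      have hs : (1 + l * j) + (j / 4) * (j - l) ≤ 0 := by
        nlinarith [mul_nonneg (sub_nonneg.mpr hjN) (by linarith : (0:ℝ) ≤ j),
          mul_nonneg (sub_nonneg.mpr hj1) (by linarith : (0:ℝ) ≤ -l)]
      nlinarith [mul_nonpos_of_nonpos_of_nonneg hs hq.le]
    have hsum2 := Finset.sum_le_sum hterm
    rw [Finset.sum_neg_distrib, ← Finset.mul_sum] at hsum2
    have hz : ((0 : ℕ) : ℝ) / (1 + ((0 : ℕ) : ℝ) ^ 2) = 0 := by norm_num
    rw [hz]
    linarith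
  have hGl : G l = ∑ k ∈ Finset.range (N + 1), f k + ∑' k : ℕ, f (k + (N + 1)) :=
    hsplit.symm
  calc G l = _ := hGl
    _ ≤ 1 - (1 / 4) * ∑ k ∈ Finset.range (N + 1), (k : ℝ) / (1 + (k : ℝ) ^ 2) := by
        linarith
    _ ≤ M := by linarith
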